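/- For every integer k ≥ 1, the meander of type 2|2|⋯|2|1 (with k top blocks of size 2 followed by one top block of size 1, on 2k+1 vertices) is Frobenius; that is, its meander graph is connected and acyclic. -/

import Mathlib

/-- The meander graph of type `a₁|a₂|⋯|a_ℓ` where `L = [a₁,…,a_ℓ]` is the list of top
block sizes, on vertex set `Fin (a₁ + ⋯ + a_ℓ)`, with top edges within each block and
bottom edges `j ↔ n - 1 - j` coming from the single bottom block of size `n = L.sum`. -/
def meander (L : List ℕ) : SimpleGraph (Fin L.sum) :=
  SimpleGraph.fromRel (fun u v =>
    (∃ k : Fin L.length, ∃ i : ℕ, i < L.get k ∧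
      (u : ℕ) = (L.take k.val).sum + i ∧
      (v : ℕ) = (L.take k.val).sum + (L.get k - 1 - i))
    ∨ ((u : ℕ) + (v : ℕ) = L.sum - 1))

/-- A connected component is a cycle component if every vertex in it has degree 2. -/
def SimpleGraph.IsCycleComponent {V : Type*} (G : SimpleGraph V)
    (c : G.ConnectedComponent) : Prop :=
  ∀ v : V, G.connectedComponentMk v = c → (G.neighborSet v).ncard = 2

/-- The number of connected components of `G` that are cycles. -/
noncomputable def numCycleComponents {V : Type*} (G : SimpleGraph V) : ℕ :=
  Nat.card {c : G.ConnectedComponent // G.IsCycleComponent c}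

/-- The number of connected components of `G` that are paths (i.e. not cycles). -/
noncomputable def numPathComponents {V : Type*} (G : SimpleGraph V) : ℕ :=
  Nat.card {c : G.ConnectedComponent // ¬ G.IsCycleComponent c}

/-- A meander is Frobenius if its graph is a single path, equivalently (as every vertex
has degree at most 2) connected and acyclic. -/
def IsFrobenius {V : Type*} (G : SimpleGraph V) : Prop :=
  G.Connected ∧ G.IsAcyclic

/-! ### Auxiliary lemmas -/

lemma sum_L (k : ℕ) : (List.replicate k 2 ++ [1]).sum = 2*k+1 := by
  simp [List.sum_replicate]; ring

lemma get_L (k : ℕ) (j : Fin (List.replicate k 2 ++ [1]).length) :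
    (List.replicate k 2 ++ [1]).get j = if (j:ℕ) < k then 2 else 1 := by
  rcases j with ⟨j, hj⟩
  simp only [List.get_eq_getElem]
  split_ifs with h
  · rw [List.getElem_append_left (by simpa using h)]
    simp
  · have hjk : j = k := by simp at hj; omega
    subst hjk
    rw [List.getElem_append_right (by simp)]
    simp

lemma take_sum_L (k j : ℕ) (hj : j ≤ k) :
    ((List.replicate k 2 ++ [1]).take j).sum = 2*j := by
  rw [List.take_append_of_le_length (by simpa using hj), List.take_replicate]
  simp [List.sum_replicate]
  omega

lemma rel_oneside (k : ℕ) (u v : ℕ)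
    (h : (∃ j : Fin (List.replicate k 2 ++ [1]).length, ∃ i : ℕ,
        i < (List.replicate k 2 ++ [1]).get j ∧
        u = ((List.replicate k 2 ++ [1]).take j.val).sum + i ∧
        v = ((List.replicate k 2 ++ [1]).take j.val).sum +
            ((List.replicate k 2 ++ [1]).get j - 1 - i))
      ∨ (u + v = (List.replicate k 2 ++ [1]).sum - 1)) :
    u + v = 2*k ∨ u/2 = v/2 := by
  rcases h with ⟨j, i, hi, hu, hv⟩ | h
  · have hg := get_L k j
    have hjle : (j : ℕ) ≤ k := by have := j.isLt; simp at this; omega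
    have hts := take_sum_L k j hjle
    rw [hg] at hi hv
    rw [hts] at hu hv
    split_ifs at hi hv with hcase
    · right; omega
    · omega
  · rw [sum_L] at h; omega

lemma rel_other (k : ℕ) (u v : ℕ) (hu : u ≤ 2*k) (hv : v ≤ 2*k) (huv : u ≠ v)
    (h : u + v = 2*k ∨ u/2 = v/2) :
    (∃ j : Fin (List.replicate k 2 ++ [1]).length, ∃ i : ℕ,
        i < (List.replicate k 2 ++ [1]).get j ∧
        u = ((List.replicate k 2 ++ [1]).take j.val).sum + i ∧
        v = ((List.replicate k 2 ++ [1]).take j.val).sum +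
            ((List.replicate k 2 ++ [1]).get j - 1 - i))
      ∨ (u + v = (List.replicate k 2 ++ [1]).sum - 1) := by
  rcases h with h | h
  · right; rw [sum_L]; omega
  · left
    have hub : u < 2*k := by omega
    have hvb : v < 2*k := by omega
    refine ⟨⟨u/2, by simp; omega⟩, u % 2, ?_, ?_, ?_⟩
    · rw [get_L]
      show u % 2 < if u/2 < k then 2 else 1
      rw [if_pos (by omega)]
      omega
    · rw [take_sum_L k (u/2) (by omega)]; omega
    · rw [take_sum_L k (u/2) (by omega), get_L]
      show v = 2*(u/2) + ((if u/2 < k then 2 else 1) - 1 - u % 2)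
      rw [if_pos (by omega)]
      omega

lemma meander_adj (k : ℕ) (u v : Fin (List.replicate k 2 ++ [1]).sum) :
    (meander (List.replicate k 2 ++ [1])).Adj u v ↔
      (u:ℕ) ≠ (v:ℕ) ∧ ((u:ℕ) + (v:ℕ) = 2*k ∨ (u:ℕ)/2 = (v:ℕ)/2) := by
  have hs := sum_L k
  have hu : (u:ℕ) ≤ 2*k := by have := u.isLt; omega
  have hv : (v:ℕ) ≤ 2*k := by have := v.isLt; omega
  rw [meander, SimpleGraph.fromRel_adj]
  constructor
  · rintro ⟨hne, h | h⟩
    · have hne' : (u:ℕ) ≠ (v:ℕ) := fun h' => hne (Fin.ext h')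
      exact ⟨hne', rel_oneside k u v h⟩
    · have hne' : (u:ℕ) ≠ (v:ℕ) := fun h' => hne (Fin.ext h')
      refine ⟨hne', ?_⟩
      have := rel_oneside k v u h
      omega
  · rintro ⟨hne, h⟩
    exact ⟨fun h' => hne (by rw [h']), Or.inl (rel_other k u v hu hv hne h)⟩

/-- The vertex at position `t` along the meander path. -/
def mf (k t : ℕ) : ℕ := if t % 4 = 1 ∨ t % 4 = 2 then t / 2 else 2 * k - t / 2

/-- The position of vertex `u` along the meander path. -/
def mpos (k u : ℕ) : ℕ :=
  if u < k then (if u % 2 = 0 then 2 * u + 1 else 2 * u)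
  else if u = k then 2 * k
  else (if (2*k - u) % 2 = 0 then 2 * (2*k - u) else 2 * (2*k - u) + 1)

lemma mf_le (k t : ℕ) (ht : t ≤ 2*k) : mf k t ≤ 2*k := by
  unfold mf; split <;> omega

lemma mpos_le (k u : ℕ) (hu : u ≤ 2*k) : mpos k u ≤ 2*k := by
  unfold mpos; split_ifs <;> omega

lemma mf_mpos (k u : ℕ) (hu : u ≤ 2*k) : mf k (mpos k u) = u := by
  unfold mf mpos; split_ifs <;> omega

lemma mf_step (k t : ℕ) (ht : t < 2*k) :
    mf k t ≠ mf k (t+1) ∧ (mf k t + mf k (t+1) = 2*k ∨ mf k t / 2 = mf k (t+1) / 2) := by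
  unfold mf; split_ifs <;> omega

lemma adj_mpos (k u v : ℕ) (hu : u ≤ 2*k) (hv : v ≤ 2*k) (huv : u ≠ v)
    (h : u + v = 2*k ∨ u/2 = v/2) :
    mpos k v = mpos k u + 1 ∨ mpos k u = mpos k v + 1 := by
  unfold mpos; split_ifs <;> omega

/-- The meander of type `2|2|⋯|2|1` (with `k ≥ 1` blocks of size 2 followed by one
block of size 1) is Frobenius. -/
theorem meander_twos_one_frobenius (k : ℕ) (hk : 1 ≤ k) :
    IsFrobenius (meander (List.replicate k 2 ++ [1])) := by
  have hs := sum_L k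
  set G := meander (List.replicate k 2 ++ [1]) with hG
  have hbd : ∀ u : Fin (List.replicate k 2 ++ [1]).sum, (u:ℕ) ≤ 2*k := by
    intro u; have := u.isLt; omega
  -- the path enumeration
  let F : ℕ → Fin (List.replicate k 2 ++ [1]).sum :=
    fun t => ⟨min (mf k t) (2*k), by omega⟩
  have hFval : ∀ t : ℕ, t ≤ 2*k → (F t : ℕ) = mf k t := by
    intro t ht
    simp only [F]
    exact min_eq_left (mf_le k t ht)
  have hFsurj : ∀ u : Fin (List.replicate k 2 ++ [1]).sum, F (mpos k (u:ℕ)) = u := by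
    intro u
    apply Fin.ext
    rw [hFval _ (mpos_le k u (hbd u)), mf_mpos k u (hbd u)]
  have hstep : ∀ t : ℕ, t < 2*k → G.Adj (F t) (F (t+1)) := by
    intro t ht
    rw [hG, meander_adj]
    rw [hFval t (by omega), hFval (t+1) (by omega)]
    exact mf_step k t ht
  -- injectivity of vertices from positions
  have hinj : ∀ u v : Fin (List.replicate k 2 ++ [1]).sum,
      mpos k (u:ℕ) = mpos k (v:ℕ) → u = v := by
    intro u v h
    have := hFsurj u
    rw [h, hFsurj v] at this
    exact this.symm
  -- adjacency gives consecutive positions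
  have hadjpos : ∀ u v : Fin (List.replicate k 2 ++ [1]).sum, G.Adj u v →
      mpos k (v:ℕ) = mpos k (u:ℕ) + 1 ∨ mpos k (u:ℕ) = mpos k (v:ℕ) + 1 := by
    intro u v h
    rw [hG, meander_adj] at h
    exact adj_mpos k u v (hbd u) (hbd v) h.1 h.2
  constructor
  · -- Connected
    rw [SimpleGraph.connected_iff]
    have hreach : ∀ t : ℕ, t ≤ 2*k → G.Reachable (F 0) (F t) := by
      intro t
      induction t with
      | zero => exact fun _ => SimpleGraph.Reachable.refl _
      | succ t ih =>
        intro h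
        exact (ih (by omega)).trans (hstep t (by omega)).reachable
    refine ⟨?_, ⟨⟨0, by omega⟩⟩⟩
    intro u v
    have h1 := hreach (mpos k (u:ℕ)) (mpos_le k u (hbd u))
    have h2 := hreach (mpos k (v:ℕ)) (mpos_le k v (hbd v))
    rw [hFsurj u] at h1
    rw [hFsurj v] at h2
    exact h1.symm.trans h2
  · -- Acyclic
    rw [SimpleGraph.isAcyclic_iff_forall_adj_isBridge]
    have claim : ∀ u v : Fin (List.replicate k 2 ++ [1]).sum, G.Adj u v →
        mpos k (v:ℕ) = mpos k (u:ℕ) + 1 →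
        ¬(G \ SimpleGraph.fromEdgeSet {s(u,v)}).Reachable u v := by
      intro u v hadj hpos hr
      obtain ⟨w⟩ := hr
      have inv : ∀ (a b : Fin (List.replicate k 2 ++ [1]).sum)
          (p : (G \ SimpleGraph.fromEdgeSet {s(u,v)}).Walk a b),
          mpos k (a:ℕ) ≤ mpos k (u:ℕ) → mpos k (b:ℕ) ≤ mpos k (u:ℕ) := by
        intro a b p
        induction p with
        | nil => exact id
        | @cons a c b h p ih =>
          intro ha
          apply ih
          rw [SimpleGraph.sdiff_adj] at h
          obtain ⟨hGac, hnot⟩ := h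
          by_contra hc
          push_neg at hc
          -- mpos c > mpos u ≥ mpos a, and they differ by 1
          have hd := hadjpos a c hGac
          have h1 : mpos k (a:ℕ) = mpos k (u:ℕ) := by omega
          have h2 : mpos k (c:ℕ) = mpos k (v:ℕ) := by omega
          have hau : a = u := hinj a u h1
          have hcv : c = v := hinj c v h2
          apply hnot
          rw [SimpleGraph.fromEdgeSet_adj]
          subst hau hcv
          exact ⟨rfl, hGac.ne⟩
      have := inv u v w le_rfl
      omega
    intro u v hadj
    rw [SimpleGraph.isBridge_iff]
    rcases hadjpos u v hadj with h | h
    · exact claim u v hadj h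
    · intro hr
      apply claim v u hadj.symm h
      rw [Sym2.eq_swap]
      exact hr.symm
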